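/- Let R be an order in K and let I and J be fractional R-ideals. Then I and J are isomorphic as R-modules if and only if there exists an invertible element λ ∈ K such that I = λJ. -/

import Mathlib

/-!
Setting: `Z` is a Dedekind domain (not a field) with fraction field `Q`;
`K i` (for `i : Fin n`) are finite field extensions of `Q` and
`K = K₁ ⊕ ⋯ ⊕ Kₙ` is modelled as the product `∀ i, K i`;
`O i = integralClosure Z (K i)` and `O = integralClosure Z (∀ i, K i)`;
`V = K₁^(s 1) ⊕ ⋯ ⊕ Kₙ^(s n)` is modelled as `∀ i, Fin (s i) → K i`,
a module over `∀ i, K i` with the componentwise diagonal action.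
-/

open Submodule

section Paper

variable (Z : Type) [CommRing Z] [IsDomain Z] [IsDedekindDomain Z]
  (Q : Type) [Field Q] [Algebra Z Q] [IsFractionRing Z Q]
  {n : ℕ} (K : Fin n → Type) [∀ i, Field (K i)]
  [∀ i, Algebra Q (K i)] [∀ i, FiniteDimensional Q (K i)]
  [∀ i, Algebra Z (K i)] [∀ i, IsScalarTower Z Q (K i)]

/-- A *lattice* in a finite-dimensional `Q`-vector space `W`: a finitely generated
sub-`Z`-module of `W` which contains a `Q`-basis of `W` (equivalently, spans `W` over `Q`). -/
def IsLatticeIn {W : Type} [AddCommGroup W] [Module Q W] [Module Z W]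
    (L : Submodule Z W) : Prop :=
  L.FG ∧ Submodule.span Q (L : Set W) = ⊤

/-- An *order* in `K = K₁ ⊕ ⋯ ⊕ Kₙ`: a subring of `K` which is a lattice in `K`
(equivalently, a `Z`-subalgebra whose underlying `Z`-module is a lattice in `K`). -/
def IsOrderIn (R : Subalgebra Z (∀ i, K i)) : Prop :=
  IsLatticeIn Z Q (Subalgebra.toSubmodule R)

/-- A sub-`Z`-module `M` of a `(∀ i, K i)`-module is a *sub-`R`-module* if it is stable
under the order `R`, i.e. `r • v ∈ M` for all `r ∈ R` and `v ∈ M`. -/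
def IsStableUnder {W : Type} [AddCommGroup W] [Module Z W] [Module (∀ i, K i) W]
    (R : Subalgebra Z (∀ i, K i)) (M : Submodule Z W) : Prop :=
  ∀ r ∈ R, ∀ v ∈ M, r • v ∈ M

/-- `M` and `N` are *isomorphic as `R`-modules*: there is an additive isomorphism
`M ≃ N` commuting with the action of every element of `R`. -/
def ModIso {W W' : Type} [AddCommGroup W] [Module Z W] [Module (∀ i, K i) W]
    [AddCommGroup W'] [Module Z W'] [Module (∀ i, K i) W']
    (R : Subalgebra Z (∀ i, K i)) (M : Submodule Z W) (N : Submodule Z W') : Prop :=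
  ∃ e : M ≃+ N, ∀ r ∈ R, ∀ (v : W) (hv : v ∈ M) (hrv : r • v ∈ M),
    ((e ⟨r • v, hrv⟩ : N) : W') = r • ((e ⟨v, hv⟩ : N) : W')

variable (s : Fin n → ℕ)

/-- The sub-`Z`-module of `V = ⊕ᵢ Kᵢ^(sᵢ)` cut out coordinatewise by a family of
submodules `W i j ⊆ Kᵢ`. -/
def piLatticeV (W : ∀ i, Fin (s i) → Submodule Z (K i)) :
    Submodule Z (∀ i, Fin (s i) → K i) where
  carrier := {v | ∀ i j, v i j ∈ W i j}
  add_mem' := fun hu hv i j => (W i j).add_mem (hu i j) (hv i j)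
  zero_mem' := fun i j => (W i j).zero_mem
  smul_mem' := fun z _ hv i j => (W i j).smul_mem z (hv i j)

/-- The sub-`Z`-module `I₁ ⊕ ⋯ ⊕ Iₙ` of `K = K₁ ⊕ ⋯ ⊕ Kₙ`. -/
def piIdeal (I : ∀ i, Submodule Z (K i)) : Submodule Z (∀ i, K i) where
  carrier := {x | ∀ i, x i ∈ I i}
  add_mem' := fun hu hv i => (I i).add_mem (hu i) (hv i)
  zero_mem' := fun i => (I i).zero_mem
  smul_mem' := fun z _ hx i => (I i).smul_mem z (hx i)

/-- A *fractional `Oᵢ`-ideal*: a finitely generated `Oᵢ`-stable sub-`Z`-module of `Kᵢ`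
containing a `Q`-basis of `Kᵢ`, where `Oᵢ` is the integral closure of `Z` in `Kᵢ`. -/
def IsFracIdealAt (i : Fin n) (I : Submodule Z (K i)) : Prop :=
  I.FG ∧ Submodule.span Q (I : Set (K i)) = ⊤ ∧
    ∀ r ∈ integralClosure Z (K i), ∀ x ∈ I, r * x ∈ I

/-- A *fractional ideal of the order `S`* in `K`: a finitely generated `S`-stable
sub-`Z`-module of `K` containing a `Q`-basis of `K`. -/
def IsFracIdealOf (S : Subalgebra Z (∀ i, K i)) (J : Submodule Z (∀ i, K i)) : Prop :=
  J.FG ∧ Submodule.span Q (J : Set (∀ i, K i)) = ⊤ ∧ ∀ r ∈ S, ∀ x ∈ J, r * x ∈ J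

/-- The family `(O₁, …, Oₙ)` of maximal orders, as submodules. -/
def maxFam : ∀ i : Fin n, Submodule Z (K i) :=
  fun i => Subalgebra.toSubmodule (integralClosure Z (K i))

/-- The module `⊕ᵢ (Oᵢ^(sᵢ-1) ⊕ Iᵢ)` inside `V`: in the `i`-th block, the first
`sᵢ - 1` coordinates are `Oᵢ` and the last one is `Iᵢ`. -/
def stdMod (I : ∀ i, Submodule Z (K i)) : Submodule Z (∀ i, Fin (s i) → K i) :=
  piLatticeV Z K s (fun i j =>
    if (j : ℕ) + 1 < s i then Subalgebra.toSubmodule (integralClosure Z (K i)) else I i)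

/-- The `i`-th component `fᵢ` of the conductor `f = (R : O)`:
those `a ∈ Kᵢ` with `a·Oᵢ ⊆ R` (via the canonical embedding `Kᵢ → K`). -/
def conductorComp (R : Subalgebra Z (∀ i, K i)) (i : Fin n) : Submodule Z (K i) where
  carrier := {a | ∀ b ∈ integralClosure Z (K i), Pi.single i (a * b) ∈ R}
  add_mem' := by
    intro x y hx hy b hb
    simpa [add_mul, Pi.single_add] using R.add_mem (hx b hb) (hy b hb)
  zero_mem' := by
    intro b hb
    simpa using R.zero_mem
  smul_mem' := by
    intro z x hx b hb
    simpa [smul_mul_assoc, Pi.single_smul] using R.smul_mem (hx b hb) z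

/-- The conductor `f = (R : O) = {x ∈ K : x·O ⊆ R}` as a sub-`Z`-module of `K`. -/
def conductorSub (R : Subalgebra Z (∀ i, K i)) : Submodule Z (∀ i, K i) where
  carrier := {x | ∀ y ∈ integralClosure Z (∀ i, K i), x * y ∈ R}
  add_mem' := by
    intro x y hx hy b hb
    simpa [add_mul] using R.add_mem (hx b hb) (hy b hb)
  zero_mem' := by
    intro b hb
    simpa using R.zero_mem
  smul_mem' := by
    intro z x hx b hb
    simpa [smul_mul_assoc] using R.smul_mem (hx b hb) z

/-- The module `⊕ᵢ (fᵢ^(sᵢ-1) ⊕ fᵢIᵢ)` inside `V`, where `f = f₁ ⊕ ⋯ ⊕ fₙ` is the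
conductor of the order `R` in the maximal order. -/
def stdModLow (R : Subalgebra Z (∀ i, K i)) (I : ∀ i, Submodule Z (K i)) :
    Submodule Z (∀ i, Fin (s i) → K i) :=
  piLatticeV Z K s (fun i j =>
    if (j : ℕ) + 1 < s i then conductorComp Z K R i else conductorComp Z K R i * I i)

/-- `M·S`, the `S`-module generated by `M` (e.g. `M·O`): the smallest sub-`Z`-module
containing all `r • v` with `r ∈ S` and `v ∈ M`. -/
def extendOrd {W : Type} [AddCommGroup W] [Module Z W] [Module (∀ i, K i) W]
    (S : Subalgebra Z (∀ i, K i)) (M : Submodule Z W) : Submodule Z W :=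
  Submodule.span Z {x | ∃ r ∈ S, ∃ v ∈ M, x = r • v}

/-- An *`R`-linear isomorphism between the quotient modules* `B/A` and `D/C`:
an additive isomorphism compatible with the induced action of every `r ∈ R`. -/
def QuotModIso {W W' : Type} [AddCommGroup W] [Module Z W] [Module (∀ i, K i) W]
    [AddCommGroup W'] [Module Z W'] [Module (∀ i, K i) W']
    (R : Subalgebra Z (∀ i, K i)) (B A : Submodule Z W) (D C : Submodule Z W') : Prop :=
  ∃ e : (↥B ⧸ A.comap B.subtype) ≃+ (↥D ⧸ C.comap D.subtype),
    ∀ r ∈ R, ∀ (v : W) (hv : v ∈ B) (hrv : r • v ∈ B)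
      (w : W') (hw : w ∈ D) (hrw : r • w ∈ D),
      e (Submodule.Quotient.mk ⟨v, hv⟩) = Submodule.Quotient.mk ⟨w, hw⟩ →
      e (Submodule.Quotient.mk ⟨r • v, hrv⟩) = Submodule.Quotient.mk ⟨r • w, hrw⟩

/-- The set `M_I`: sub-`R`-modules `N` of `V` with
`⊕ᵢ(fᵢ^(sᵢ-1) ⊕ fᵢIᵢ) ⊆ N ⊆ ⊕ᵢ(Oᵢ^(sᵢ-1) ⊕ Iᵢ)` and `N·O = ⊕ᵢ(Oᵢ^(sᵢ-1) ⊕ Iᵢ)`;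
these are exactly the preimages `q_I⁻¹(Ñ)` of the sub-`R`-modules `Ñ` of `Q(I)`
with `Ñ·O = Q(I)`. -/
def MSet (R : Subalgebra Z (∀ i, K i)) (I : ∀ i, Submodule Z (K i)) :
    Set (Submodule Z (∀ i, Fin (s i) → K i)) :=
  {N | stdModLow Z K s R I ≤ N ∧ N ≤ stdMod Z K s I ∧ IsStableUnder Z K R N ∧
    extendOrd Z K (integralClosure Z (∀ i, K i)) N = stdMod Z K s I}

/-- The set `q_I⁻¹(ψ̃(q_O(M)))`, where `ψ̃` is realised by the additive equivalence `e`
between `Q(O) = (⊕ᵢ(Oᵢ^(sᵢ-1) ⊕ Oᵢ))/(⊕ᵢ(fᵢ^(sᵢ-1) ⊕ fᵢOᵢ))` and `Q(I)`. -/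
def psiSet (R : Subalgebra Z (∀ i, K i)) (I : ∀ i, Submodule Z (K i))
    (e : (↥(stdMod Z K s (maxFam Z K)) ⧸
            (stdModLow Z K s R (maxFam Z K)).comap (stdMod Z K s (maxFam Z K)).subtype) ≃+
         (↥(stdMod Z K s I) ⧸ (stdModLow Z K s R I).comap (stdMod Z K s I).subtype))
    (M : Submodule Z (∀ i, Fin (s i) → K i)) : Set (∀ i, Fin (s i) → K i) :=
  {v | ∃ (hv : v ∈ stdMod Z K s I), ∃ m, ∃ (_ : m ∈ M) (hmO : m ∈ stdMod Z K s (maxFam Z K)),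
    e (Submodule.Quotient.mk ⟨m, hmO⟩) = Submodule.Quotient.mk ⟨v, hv⟩}



include Q in
lemma aux_algebraMap_ne (i : Fin n) {z : Z} (hz : z ≠ 0) : algebraMap Z (K i) z ≠ 0 := by
  rw [IsScalarTower.algebraMap_apply Z Q (K i)]
  intro h
  have h2 : algebraMap Z Q z = 0 := (algebraMap Q (K i)).injective (by simpa using h)
  exact hz (IsFractionRing.injective Z Q (by simpa using h2))

include Q in
lemma aux_cancel {z : Z} (hz : z ≠ 0) {a b : ∀ i, K i} (h : z • a = z • b) : a = b := by
  funext i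
  have h1 := congrFun h i
  simp only [Pi.smul_apply, Algebra.smul_def] at h1
  exact mul_left_cancel₀ (aux_algebraMap_ne Z Q K i hz) h1

/-- Auxiliary: denominators into an order. -/
lemma aux_denom (R : Subalgebra Z (∀ i, K i)) (hR : IsOrderIn Z Q K R)
    (k : ∀ i, K i) : ∃ z : Z, z ≠ 0 ∧ z • k ∈ R := by
  have hk : k ∈ Submodule.span Q ((Subalgebra.toSubmodule R : Submodule Z (∀ i, K i)) : Set (∀ i, K i)) := by
    rw [hR.2]; trivial
  induction hk using Submodule.span_induction with
  | mem x hx => exact ⟨1, one_ne_zero, by simpa using hx⟩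
  | zero => exact ⟨1, one_ne_zero, by simpa using R.zero_mem⟩
  | add x y _ _ hx hy =>
      obtain ⟨z1, hz1, h1⟩ := hx
      obtain ⟨z2, hz2, h2⟩ := hy
      refine ⟨z1 * z2, mul_ne_zero hz1 hz2, ?_⟩
      rw [smul_add]
      refine R.add_mem ?_ ?_
      · rw [mul_comm, mul_smul]; exact R.smul_mem h1 z2
      · rw [mul_smul]; exact R.smul_mem h2 z1
  | smul q x _ hx =>
      obtain ⟨z, hz, h⟩ := hx
      obtain ⟨⟨c, d⟩, hq⟩ := IsLocalization.mk'_surjective (nonZeroDivisors Z) q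
      have hd : (d : Z) ≠ 0 := nonZeroDivisors.coe_ne_zero d
      refine ⟨z * d, mul_ne_zero hz hd, ?_⟩
      have hdq : (d : Z) • q = algebraMap Z Q c := by
        rw [Algebra.smul_def, ← hq, IsLocalization.mk'_spec']
      have h1 : (d : Z) • (q • x) = c • x := by
        rw [← smul_assoc, hdq, algebraMap_smul]
      have h2 : (z * (d : Z)) • (q • x) = c • (z • x) := by
        rw [mul_smul, h1, smul_comm]
      rw [h2]
      exact R.smul_mem h c

/-- Auxiliary: a `Z`-submodule spanning over `Q` has, for each `i`, an element with
nonzero `i`-th coordinate. -/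
lemma aux_nonzero (M : Submodule Z (∀ i, K i))
    (hM : Submodule.span Q (M : Set (∀ i, K i)) = ⊤) (i : Fin n) :
    ∃ x, ∃ _ : x ∈ M, x i ≠ 0 := by
  by_contra h
  push_neg at h
  have hle : Submodule.span Q (M : Set (∀ i, K i)) ≤
      LinearMap.ker (LinearMap.proj (R := Q) (φ := K) i) := by
    rw [Submodule.span_le]
    intro x hx
    simp only [SetLike.mem_coe, LinearMap.mem_ker, LinearMap.proj_apply]
    exact h x hx
  rw [hM] at hle
  have h1 : (1 : ∀ i, K i) i = 0 := hle Submodule.mem_top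
  exact one_ne_zero h1

/-- Two fractional `R`-ideals `I` and `J` are isomorphic as
`R`-modules if and only if `I = λJ` for some invertible `λ ∈ K`. -/
theorem statement9
    (hZ : ¬ IsField Z)
    (R : Subalgebra Z (∀ i, K i)) (hR : IsOrderIn Z Q K R)
    (I J : Submodule Z (∀ i, K i))
    (hI : IsFracIdealOf Z Q K R I) (hJ : IsFracIdealOf Z Q K R J) :
    ModIso Z K R I J ↔
      ∃ lam : ∀ i, K i, IsUnit lam ∧ I = Submodule.map (LinearMap.mulLeft Z lam) J := by
  classical
  constructor
  · rintro ⟨e, he⟩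
    -- Z-linearity of e
    have hZlin : ∀ (z : Z) (x : ∀ i, K i) (hx : x ∈ I) (hzx : z • x ∈ I),
        ((e ⟨z • x, hzx⟩ : J) : ∀ i, K i) = z • ((e ⟨x, hx⟩ : J) : ∀ i, K i) := by
      intro z x hx hzx
      have hr : algebraMap Z (∀ i, K i) z ∈ R := R.algebraMap_mem z
      have hsm : algebraMap Z (∀ i, K i) z • x = z • x := by
        rw [smul_eq_mul, ← Algebra.smul_def]
      have h2 : (⟨z • x, hzx⟩ : I) = ⟨algebraMap Z (∀ i, K i) z • x, hsm ▸ hzx⟩ :=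
        Subtype.ext hsm.symm
      rw [h2, he _ hr x hx (hsm ▸ hzx), smul_eq_mul, ← Algebra.smul_def]
    -- key cross identity
    have key : ∀ (x : ∀ i, K i) (hx : x ∈ I) (y : ∀ i, K i) (hy : y ∈ I),
        y * ((e ⟨x, hx⟩ : J) : ∀ i, K i) = x * ((e ⟨y, hy⟩ : J) : ∀ i, K i) := by
      intro x hx y hy
      obtain ⟨z, hz, hzy⟩ := aux_denom Z Q K R hR y
      obtain ⟨w, hw, hwx⟩ := aux_denom Z Q K R hR x
      have hrx : (z • y) • x ∈ I := by
        rw [smul_eq_mul]; exact hI.2.2 _ hzy x hx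
      have hsy : (w • x) • y ∈ I := by
        rw [smul_eq_mul]; exact hI.2.2 _ hwx y hy
      have h1 := he (z • y) hzy x hx hrx
      have h2 := he (w • x) hwx y hy hsy
      have harg : w • ((z • y) • x) = z • ((w • x) • y) := by
        funext i
        simp only [Pi.smul_apply, smul_eq_mul, Pi.mul_apply, Algebra.smul_def,
          Pi.algebraMap_apply]
        ring
      have hm1 : w • ((z • y) • x) ∈ I := I.smul_mem w hrx
      have hm2 : z • ((w • x) • y) ∈ I := I.smul_mem z hsy
      have hZ1 := hZlin w _ hrx hm1
      have hZ2 := hZlin z _ hsy hm2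
      have heq' : (⟨w • ((z • y) • x), hm1⟩ : I) = ⟨z • ((w • x) • y), hm2⟩ :=
        Subtype.ext harg
      rw [heq', hZ2, h2] at hZ1
      rw [h1] at hZ1
      -- hZ1 : w • ((z•y) • Ex) = z • ((w•x) • Ey)
      refine aux_cancel Z Q K (mul_ne_zero hw hz) ?_
      funext i
      have h3 := congrFun hZ1 i
      simp only [Pi.smul_apply, smul_eq_mul, Pi.mul_apply, Algebra.smul_def, map_mul,
        Pi.algebraMap_apply] at h3 ⊢
      linear_combination -h3
    choose xx hxxI hxxne using fun i => aux_nonzero Z Q K I hI.2.1 i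
    set lam0 : ∀ i, K i := fun i => ((e ⟨xx i, hxxI i⟩ : J) : ∀ i, K i) i * (xx i i)⁻¹
      with hlam0
    have lam_spec : ∀ (y) (hy : y ∈ I) (i : Fin n),
        ((e ⟨y, hy⟩ : J) : ∀ i, K i) i = lam0 i * y i := by
      intro y hy i
      have hk := congrFun (key (xx i) (hxxI i) y hy) i
      simp only [Pi.mul_apply] at hk
      have hne := hxxne i
      rw [hlam0]
      field_simp
      linear_combination -hk
    have psi_mem : ∀ (w) (hw : w ∈ J), ((e.symm ⟨w, hw⟩ : I) : ∀ i, K i) ∈ I :=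
      fun w hw => (e.symm ⟨w, hw⟩).2
    have e_psi : ∀ (w) (hw : w ∈ J),
        e ⟨((e.symm ⟨w, hw⟩ : I) : ∀ i, K i), psi_mem w hw⟩ = ⟨w, hw⟩ := by
      intro w hw
      have h : (⟨((e.symm ⟨w, hw⟩ : I) : ∀ i, K i), psi_mem w hw⟩ : I) = e.symm ⟨w, hw⟩ :=
        Subtype.ext rfl
      rw [h, AddEquiv.apply_symm_apply]
    have w_spec : ∀ (w) (hw : w ∈ J) (i : Fin n),
        w i = lam0 i * ((e.symm ⟨w, hw⟩ : I) : ∀ i, K i) i := by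
      intro w hw i
      have h := lam_spec _ (psi_mem w hw) i
      rw [e_psi w hw] at h
      exact h
    have lam_ne : ∀ i, lam0 i ≠ 0 := by
      intro i h0
      obtain ⟨w, hw, hwne⟩ := aux_nonzero Z Q K J hJ.2.1 i
      exact hwne (by rw [w_spec w hw i, h0, zero_mul])
    refine ⟨fun i => (lam0 i)⁻¹, isUnit_iff_exists_inv.2
      ⟨lam0, by funext i; exact inv_mul_cancel₀ (lam_ne i)⟩, ?_⟩
    ext a
    simp only [Submodule.mem_map, LinearMap.mulLeft_apply]
    constructor
    · intro ha
      refine ⟨((e ⟨a, ha⟩ : J) : ∀ i, K i), (e ⟨a, ha⟩).2, ?_⟩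
      funext i
      simp only [Pi.mul_apply]
      rw [lam_spec a ha i, ← mul_assoc, inv_mul_cancel₀ (lam_ne i), one_mul]
    · rintro ⟨w, hw, rfl⟩
      have h : (fun i => (lam0 i)⁻¹) * w = ((e.symm ⟨w, hw⟩ : I) : ∀ i, K i) := by
        funext i
        simp only [Pi.mul_apply]
        rw [w_spec w hw i, ← mul_assoc, inv_mul_cancel₀ (lam_ne i), one_mul]
      rw [h]
      exact psi_mem w hw
  · rintro ⟨lam, hlam, hIJ⟩
    obtain ⟨u, rfl⟩ := hlam
    have memJ : ∀ x : ∀ i, K i, x ∈ I → (↑u⁻¹ : ∀ i, K i) * x ∈ J := by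
      intro x hx
      rw [hIJ] at hx
      obtain ⟨y, hy, rfl⟩ := hx
      rw [LinearMap.mulLeft_apply, ← mul_assoc, Units.inv_mul, one_mul]
      exact hy
    have memI : ∀ y : ∀ i, K i, y ∈ J → (↑u : ∀ i, K i) * y ∈ I := by
      intro y hy
      rw [hIJ]
      exact ⟨y, hy, rfl⟩
    refine ⟨{
      toFun := fun x => ⟨(↑u⁻¹ : ∀ i, K i) * (x : ∀ i, K i), memJ _ x.2⟩
      invFun := fun y => ⟨(↑u : ∀ i, K i) * (y : ∀ i, K i), memI _ y.2⟩
      left_inv := by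
        intro x
        refine Subtype.ext ?_
        show (↑u : ∀ i, K i) * ((↑u⁻¹ : ∀ i, K i) * (x : ∀ i, K i)) = (x : ∀ i, K i)
        rw [← mul_assoc, Units.mul_inv, one_mul]
      right_inv := by
        intro y
        refine Subtype.ext ?_
        show (↑u⁻¹ : ∀ i, K i) * ((↑u : ∀ i, K i) * (y : ∀ i, K i)) = (y : ∀ i, K i)
        rw [← mul_assoc, Units.inv_mul, one_mul]
      map_add' := by
        intro x y; ext; simp [mul_add] }, ?_⟩
    intro r hr v hv hrv
    simp only [AddEquiv.coe_mk, Equiv.coe_fn_mk, smul_eq_mul]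
    ring

end Paper
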